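/- Let (x_m) and (y_m) be sequences of non-negative integers with x_m < y_m for all m and y_m → ∞, and let (e_m), (g_m) be sequences of non-negative reals with R_m = Σ_{v = x_m+1}^{y_m} e_v · g_{y_m − v} > 0 for all m. Let f : ℝ → ℝ be uniformly continuous on ℝ and let (Y_n) be a sequence of random variables that is deferred Nörlund statistically convergent in probability to a random variable Y. Then the sequence (f(Y_n)) is deferred Nörlund statistically convergent in probability to f(Y). -/
import Mathlib


open MeasureTheory Filter

/-- The deferred Nörlund normalizing sum `R_m = ∑_{v=x_m+1}^{y_m} e_v g_{y_m - v}`. -/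
noncomputable def Rm (x y : ℕ → ℕ) (e g : ℕ → ℝ) (m : ℕ) : ℝ :=
  ∑ v ∈ Finset.Ioc (x m) (y m), e v * g (y m - v)

/-- The family of sets `{n : n ≤ R_m and A m n}` has deferred Nörlund density zero. -/
def DNZero (x y : ℕ → ℕ) (e g : ℕ → ℝ) (A : ℕ → ℕ → Prop) : Prop :=
  Tendsto
    (fun m => (Nat.card {n : ℕ | (n : ℝ) ≤ Rm x y e g m ∧ A m n} : ℝ) / Rm x y e g m)
    atTop (nhds 0)

/-- Deferred Nörlund statistical convergence in probability of `(Y n)` to `Z`. -/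
def StDNP {Ω : Type*} [MeasurableSpace Ω] (μ : Measure Ω)
    (x y : ℕ → ℕ) (e g : ℕ → ℝ) (Y : ℕ → Ω → ℝ) (Z : Ω → ℝ) : Prop :=
  ∀ ε > (0 : ℝ), ∀ δ > (0 : ℝ),
    DNZero x y e g
      (fun m n => δ ≤ e (y m - n) * g n * (μ {ω | ε ≤ |Y n ω - Z ω|}).toReal)

lemma dnzero_mono (x y : ℕ → ℕ) (e g : ℕ → ℝ) (hR : ∀ m, 0 < Rm x y e g m)
    {A B : ℕ → ℕ → Prop} (hAB : ∀ m n, A m n → B m n)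
    (hB : DNZero x y e g B) : DNZero x y e g A := by
  refine squeeze_zero (fun m => ?_) (fun m => ?_) hB
  · exact div_nonneg (Nat.cast_nonneg _) (hR m).le
  · apply div_le_div_of_nonneg_right _ (hR m).le
    have hfin : {n : ℕ | (n : ℝ) ≤ Rm x y e g m ∧ B m n}.Finite := by
      apply Set.Finite.subset (Set.finite_Icc 0 ⌊Rm x y e g m⌋₊)
      intro n hn
      simp only [Set.mem_Icc]
      exact ⟨Nat.zero_le _, Nat.le_floor hn.1⟩
    have hsub : {n : ℕ | (n : ℝ) ≤ Rm x y e g m ∧ A m n} ⊆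
        {n : ℕ | (n : ℝ) ≤ Rm x y e g m ∧ B m n} :=
      Set.setOf_subset_setOf.mpr (fun n hn => ⟨hn.1, hAB m n hn.2⟩)
    exact_mod_cast Nat.card_mono hfin hsub

/-- If `f : ℝ → ℝ` is uniformly continuous and `(Y n)` is St_DNP-convergent
to `V`, then `(f ∘ Y n)` is St_DNP-convergent to `f ∘ V`. -/
theorem stmt_6 {Ω : Type*} [MeasurableSpace Ω] (μ : Measure Ω) [IsProbabilityMeasure μ]
    (x y : ℕ → ℕ) (e g : ℕ → ℝ)
    (hxy : ∀ m, x m < y m) (hy : Tendsto y atTop atTop)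
    (he : ∀ m, 0 ≤ e m) (hg : ∀ m, 0 ≤ g m)
    (hR : ∀ m, 0 < Rm x y e g m)
    (f : ℝ → ℝ) (hf : UniformContinuous f)
    (Y : ℕ → Ω → ℝ) (V : Ω → ℝ)
    (hYmeas : ∀ n, Measurable (Y n)) (hVmeas : Measurable V)
    (hY : StDNP μ x y e g Y V) :
    StDNP μ x y e g (fun n ω => f (Y n ω)) (fun ω => f (V ω)) := by
  intro ε hε δ hδ
  obtain ⟨η, hη, hfε⟩ := Metric.uniformContinuous_iff.mp hf ε hε
  refine dnzero_mono x y e g hR (fun m n h => ?_) (hY η hη δ hδ)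
  refine le_trans h ?_
  have hsub : {ω | ε ≤ |f (Y n ω) - f (V ω)|} ⊆ {ω | η ≤ |Y n ω - V ω|} := by
    intro ω hω
    simp only [Set.mem_setOf_eq] at hω ⊢
    by_contra hc
    push_neg at hc
    have := hfε (show dist (Y n ω) (V ω) < η by rwa [Real.dist_eq])
    rw [Real.dist_eq] at this
    linarith
  have hμ : (μ {ω | ε ≤ |f (Y n ω) - f (V ω)|}).toReal ≤ (μ {ω | η ≤ |Y n ω - V ω|}).toReal := by
    apply ENNReal.toReal_mono (measure_ne_top μ _) (measure_mono hsub)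
  have hegnn : 0 ≤ e (y m - n) * g n := mul_nonneg (he _) (hg _)
  exact mul_le_mul_of_nonneg_left hμ hegnn
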